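/- Let n ≥ 3, a > 0, and let u : B_{8a} → ℝ be a nonnegative C¹ function on the open ball B_{8a} ⊂ ℝⁿ centered at the origin. Suppose that for all x ∈ B_{4a}, all λ with 0 < λ < 2a, and all y ∈ B_{8a} with |y − x| > λ, one has (λ/|y−x|)^{n−2} u(x + λ²(y−x)/|y−x|²) ≤ u(y). Then |∇u(x)| ≤ ((n−2)/(2a)) u(x) for all x with |x| < a. -/

import Mathlib

open Set Filter Topology

set_option maxHeartbeats 2000000 in
/-- Calculus lemma (Lemma 2 in the paper): if a nonnegative `C¹` function `u` on the
ball `B_{8a}` satisfies the Kelvin-transform comparison `u_{x,λ} ≤ u` for all centers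
`x ∈ B_{4a}` and radii `0 < λ < 2a`, then `|∇u| ≤ (n-2)/(2a) · u` on `B_a`. -/
theorem calculus_lemma (n : ℕ) (hn : 3 ≤ n) (a : ℝ) (ha : 0 < a)
    (u : EuclideanSpace ℝ (Fin n) → ℝ)
    (hreg : ContDiffOn ℝ 1 u (Metric.ball (0 : EuclideanSpace ℝ (Fin n)) (8 * a)))
    (hnonneg : ∀ y ∈ Metric.ball (0 : EuclideanSpace ℝ (Fin n)) (8 * a), 0 ≤ u y)
    (hkelvin : ∀ x ∈ Metric.ball (0 : EuclideanSpace ℝ (Fin n)) (4 * a),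
      ∀ lam : ℝ, 0 < lam → lam < 2 * a →
      ∀ y ∈ Metric.ball (0 : EuclideanSpace ℝ (Fin n)) (8 * a), lam < ‖y - x‖ →
        (lam / ‖y - x‖) ^ (n - 2) * u (x + (lam ^ 2 / ‖y - x‖ ^ 2) • (y - x)) ≤ u y) :
    ∀ x : EuclideanSpace ℝ (Fin n), ‖x‖ < a →
      ‖gradient u x‖ ≤ ((n : ℝ) - 2) / (2 * a) * u x := by
  intro x hx
  have hn3 : (3:ℝ) ≤ (n:ℝ) := by exact_mod_cast hn
  have hxball : x ∈ Metric.ball (0 : EuclideanSpace ℝ (Fin n)) (8 * a) := by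
    rw [Metric.mem_ball, dist_zero_right]; linarith
  have hux : 0 ≤ u x := hnonneg x hxball
  have hdiff : DifferentiableAt ℝ u x := by
    refine (hreg.contDiffAt ?_).differentiableAt one_ne_zero
    exact Metric.isOpen_ball.mem_nhds hxball
  -- if gradient is 0, trivial
  by_cases hg0 : gradient u x = 0
  · rw [hg0, norm_zero]
    have h1 : (0:ℝ) ≤ ((n : ℝ) - 2) / (2 * a) := by
      apply div_nonneg <;> linarith
    exact mul_nonneg h1 hux
  -- if u x = 0, then x is a local min, so gradient is 0, contradiction
  by_cases hux0 : u x = 0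
  · exfalso
    apply hg0
    have hmin : IsLocalMin u x := by
      filter_upwards [Metric.isOpen_ball.mem_nhds hxball] with y hy
      rw [hux0]; exact hnonneg y hy
    have hf0 : fderiv ℝ u x = 0 := hmin.fderiv_eq_zero
    simp [gradient, hf0]
  have huxpos : 0 < u x := lt_of_le_of_ne hux (Ne.symm hux0)
  -- direction of steepest descent
  set g := gradient u x with hgdef
  have hgnorm : ‖g‖ ≠ 0 := fun h => hg0 (norm_eq_zero.mp h)
  have hgpos : 0 < ‖g‖ := lt_of_le_of_ne (norm_nonneg g) (Ne.symm hgnorm)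
  set e : EuclideanSpace ℝ (Fin n) := -(‖g‖⁻¹ • g) with hedef
  have he : ‖e‖ = 1 := by
    rw [hedef, norm_neg, norm_smul, norm_inv, norm_norm, inv_mul_cancel₀ hgnorm]
  -- fderiv in direction e equals ⟪g, e⟫ = -‖g‖
  have hfde : fderiv ℝ u x e = -‖g‖ := by
    have h1 : fderiv ℝ u x e = @inner ℝ _ _ g e := by
      rw [hgdef]
      exact (InnerProductSpace.toDual_symm_apply (𝕜 := ℝ)).symm
    rw [h1, hedef, inner_neg_right, real_inner_smul_right, real_inner_self_eq_norm_mul_norm,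
      inv_mul_cancel_left₀ hgnorm]
  set z : EuclideanSpace ℝ (Fin n) := x - a • e with hzdef
  have hzae : z + a • e = x := by rw [hzdef, sub_add_cancel]
  have hznorm : ‖z‖ < 2 * a := by
    calc ‖z‖ ≤ ‖x‖ + ‖a • e‖ := by rw [hzdef]; exact norm_sub_le _ _
    _ < a + a := by
        rw [norm_smul, he, mul_one, Real.norm_eq_abs, abs_of_pos ha]
        linarith
    _ = 2 * a := by ring
  set ψ : ℝ → ℝ := fun s => u (z + s • e) with hψdef
  set φ : ℝ → ℝ := fun s => s ^ (n - 2) * (ψ s * ψ s) with hφdef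
  have hψa : ψ a = u x := by rw [hψdef]; simp only []; rw [hzae]
  -- key monotonicity from Kelvin inequality
  have key : ∀ s ∈ Set.Ioo a (4 * a), φ a ≤ φ s := by
    intro s hs
    obtain ⟨has, hs4⟩ := hs
    have hspos : 0 < s := lt_trans ha has
    set lam := Real.sqrt (a * s) with hlamdef
    set y := z + s • e with hydef
    have hyz : y - z = s • e := by rw [hydef]; abel
    have hyznorm : ‖y - z‖ = s := by
      rw [hyz, norm_smul, he, mul_one, Real.norm_eq_abs, abs_of_pos hspos]
    have hlampos : 0 < lam := Real.sqrt_pos.mpr (by positivity)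
    have hlam2 : lam < 2 * a := by
      rw [hlamdef]
      exact (Real.sqrt_lt' (by linarith)).mpr (by nlinarith)
    have hlamlt : lam < ‖y - z‖ := by
      rw [hyznorm, hlamdef]
      exact (Real.sqrt_lt' hspos).mpr (by nlinarith)
    have hyball : y ∈ Metric.ball (0 : EuclideanSpace ℝ (Fin n)) (8 * a) := by
      rw [Metric.mem_ball, dist_zero_right]
      calc ‖y‖ ≤ ‖z‖ + ‖s • e‖ := by rw [hydef]; exact norm_add_le _ _
      _ < 2 * a + 4 * a := by
          rw [norm_smul, he, mul_one, Real.norm_eq_abs, abs_of_pos hspos]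
          linarith
      _ ≤ 8 * a := by linarith
    have hzball : z ∈ Metric.ball (0 : EuclideanSpace ℝ (Fin n)) (4 * a) := by
      rw [Metric.mem_ball, dist_zero_right]; linarith
    have hk := hkelvin z hzball lam hlampos hlam2 y hyball hlamlt
    have hlamsq : lam ^ 2 = a * s := Real.sq_sqrt (by positivity)
    have hpoint : z + (lam ^ 2 / ‖y - z‖ ^ 2) • (y - z) = x := by
      rw [hyznorm, hyz, hlamsq, smul_smul]
      rw [show a * s / s ^ 2 * s = a by field_simp]
      exact hzae
    rw [hpoint, hyznorm] at hk
    -- hk : (lam / s) ^ (n-2) * u x ≤ u y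
    have hLHS : 0 ≤ (lam / s) ^ (n - 2) * u x := by positivity
    have h2 : ((lam / s) ^ (n - 2) * u x) * ((lam / s) ^ (n - 2) * u x) ≤ u y * u y :=
      mul_self_le_mul_self hLHS hk
    have hbase : (lam / s) * (lam / s) = a / s := by
      rw [div_mul_div_comm, show lam * lam = a * s by
        rw [Real.mul_self_sqrt (le_of_lt (show (0:ℝ) < a * s by positivity))]]
      rw [mul_comm a s, mul_div_mul_left _ _ (ne_of_gt hspos)]
    have hcsq : (lam / s) ^ (n - 2) * (lam / s) ^ (n - 2) = a ^ (n - 2) / s ^ (n - 2) := by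
      rw [← mul_pow, hbase, div_pow]
    have hsne : (s:ℝ) ^ (n - 2) ≠ 0 := pow_ne_zero _ (ne_of_gt hspos)
    have hφas : φ a = s ^ (n - 2) *
        (((lam / s) ^ (n - 2) * u x) * ((lam / s) ^ (n - 2) * u x)) := by
      rw [hφdef]
      simp only []
      rw [hψa]
      rw [show ((lam / s) ^ (n - 2) * u x) * ((lam / s) ^ (n - 2) * u x)
          = ((lam / s) ^ (n - 2) * (lam / s) ^ (n - 2)) * (u x * u x) by ring, hcsq]
      field_simp
    calc φ a = s ^ (n - 2) * (((lam / s) ^ (n - 2) * u x) * ((lam / s) ^ (n - 2) * u x)) := hφas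
    _ ≤ s ^ (n - 2) * (u y * u y) := mul_le_mul_of_nonneg_left h2 (by positivity)
    _ = φ s := rfl
  -- derivative of φ at a
  have hline : HasDerivAt (fun s : ℝ => z + s • e) e a := by
    simpa using ((hasDerivAt_id a).smul_const e).const_add z
  have hψd : HasDerivAt ψ (-‖g‖) a := by
    have hfd : HasFDerivAt u (fderiv ℝ u x) ((fun s : ℝ => z + s • e) a) := by
      simpa [hzae] using hdiff.hasFDerivAt
    have := hfd.comp_hasDerivAt a hline
    rw [hfde] at this
    exact this
  have hpow : HasDerivAt (fun s : ℝ => s ^ (n - 2)) ((↑(n - 2) : ℝ) * a ^ (n - 2 - 1)) a :=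
    hasDerivAt_pow (n - 2) a
  have hφd : HasDerivAt φ
      ((↑(n - 2) : ℝ) * a ^ (n - 2 - 1) * (ψ a * ψ a)
        + a ^ (n - 2) * (-‖g‖ * ψ a + ψ a * -‖g‖)) a := by
    exact hpow.mul (hψd.mul hψd)
  -- right derivative is nonneg since φ a ≤ φ s for s slightly bigger
  set D : ℝ := (↑(n - 2) : ℝ) * a ^ (n - 2 - 1) * (ψ a * ψ a)
      + a ^ (n - 2) * (-‖g‖ * ψ a + ψ a * -‖g‖) with hDdef
  have hD : 0 ≤ D := by
    have h1 : HasDerivWithinAt φ D (Set.Ioi a) a := hφd.hasDerivWithinAt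
    have hslope : Tendsto (slope φ a) (𝓝[>] a) (𝓝 D) := by
      have h := hasDerivWithinAt_iff_tendsto_slope.mp h1
      rwa [Set.diff_singleton_eq_self (Set.notMem_Ioi.mpr le_rfl)] at h
    refine ge_of_tendsto hslope ?_
    filter_upwards [Ioo_mem_nhdsGT_of_mem ⟨le_rfl, show a < 4 * a by linarith⟩] with s hs
    rw [slope_def_field]
    exact div_nonneg (sub_nonneg.mpr (key s hs)) (by linarith [hs.1])
  -- conclude by arithmetic
  rw [hDdef, hψa] at hD
  have hcast : ((n - 2 : ℕ) : ℝ) = (n:ℝ) - 2 := by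
    have : (2:ℕ) ≤ n := by omega
    push_cast [Nat.cast_sub this]
    ring
  have hsplit : a ^ (n - 2) = a ^ (n - 2 - 1) * a := by
    rw [← pow_succ]
    congr 1
    omega
  rw [hcast, hsplit] at hD
  set c := a ^ (n - 2 - 1) with hcdef
  have hcpos : 0 < c := pow_pos ha _
  -- hD : 0 ≤ (n-2) * c * (u x * u x) + c * a * (-‖g‖ * u x + u x * -‖g‖)
  have harith : ∀ C U G N : ℝ, 0 < C → 0 < U →
      0 ≤ N * C * (U * U) + C * a * (-G * U + U * -G) → 2 * a * G ≤ N * U := by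
    intro C U G N hC hU h
    have hCU : 0 < C * U := mul_pos hC hU
    have h2 : 0 ≤ (C * U) * (N * U - 2 * a * G) := by nlinarith [h]
    nlinarith [h2, hCU]
  have hmain : 2 * a * ‖g‖ ≤ ((n:ℝ) - 2) * u x :=
    harith c (u x) ‖g‖ ((n:ℝ) - 2) hcpos huxpos hD
  rw [div_mul_eq_mul_div, le_div_iff₀ (by linarith : (0:ℝ) < 2 * a)]
  linarith
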